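/- Under randomization, the population ANCOVA coefficient of the treatment indicator equals the difference of treatment-arm outcome means regardless of misspecification of the linear adjustment: β*_A = E[Y·A]/π − E[Y·(1−A)]/(1−π). -/

import Mathlib

open MeasureTheory ProbabilityTheory

lemma aux_zero' {c d : ℝ} (h : ∀ t : ℝ, 0 ≤ t^2*d - 2*t*c) : c = 0 := by
  by_contra hc
  have hu : 0 < |d| + 1 := by positivity
  have ht := h (c / (|d| + 1))
  have hd : d ≤ |d| := le_abs_self d
  have hc2 : 0 < c^2 := by positivity
  have h1 : (c / (|d| + 1))^2 * d - 2*(c / (|d| + 1))*c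
      = (c^2 / (|d|+1)^2) * (d - 2*(|d|+1)) := by field_simp
  have hpos : 0 < c^2/(|d|+1)^2 := by positivity
  have hneg : 0 < 2*(|d|+1) - d := by linarith [abs_nonneg d]
  nlinarith [mul_pos hpos hneg]

lemma expand_int' {Ω : Type*} [MeasurableSpace Ω] (P : Measure Ω) [IsProbabilityMeasure P]
    (R g : Ω → ℝ)
    (hR2 : Integrable (fun ω => R ω^2) P) (hgR : Integrable (fun ω => g ω * R ω) P)
    (hg2 : Integrable (fun ω => g ω * g ω) P) (t : ℝ) :
    ∫ ω, (R ω - t * g ω)^2 ∂P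
      = ∫ ω, R ω^2 ∂P - 2*t*(∫ ω, g ω * R ω ∂P) + t^2 * ∫ ω, g ω * g ω ∂P := by
  have h : (fun ω => (R ω - t*g ω)^2)
      = fun ω => (R ω^2 - 2*t*(g ω * R ω)) + t^2*(g ω * g ω) := funext fun ω => by ring
  have hsub : Integrable (fun ω => R ω^2 - 2*t*(g ω*R ω)) P :=
    hR2.sub (hgR.const_mul (2*t))
  rw [h, integral_add hsub (hg2.const_mul (t^2)),
    integral_sub hR2 (hgR.const_mul (2*t)), integral_const_mul, integral_const_mul]


/-- Under randomization (`A` independent of the adjustment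
covariates `W`, with `π = P(A=1) ∈ (0,1)`), the population ANCOVA coefficient
of the treatment indicator equals the difference of treatment-arm outcome means
regardless of misspecification of the linear adjustment:
`β*_A = E[Y·A]/π − E[Y·(1−A)]/(1−π)`. -/
theorem ancova_treatment_coefficient
    {Ω : Type*} [MeasurableSpace Ω] (P : Measure Ω) [IsProbabilityMeasure P]
    {k : ℕ}
    (A : Ω → ℝ) (hA : Measurable A) (hA01 : ∀ ω, A ω = 0 ∨ A ω = 1)
    (π : ℝ) (hπ : π = (P {ω | A ω = 1}).toReal) (hπ0 : 0 < π) (hπ1 : π < 1)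
    (W : Ω → Fin k → ℝ) (hW : Measurable W)
    (hWL2 : ∀ i, MemLp (fun ω => W ω i) 2 P)
    (Y : Ω → ℝ) (hYL2 : MemLp Y 2 P)
    -- randomized treatment assignment
    (hindep : IndepFun A W P)
    -- positive definite Gram matrix of `Z = (1, A, Wᵀ)ᵀ`
    (Z : Ω → Fin (k + 2) → ℝ)
    (hZ : ∀ ω, Z ω = Fin.cons 1 (Fin.cons (A ω) (W ω)))
    (hGram : (Matrix.of fun i j : Fin (k + 2) => ∫ ω, Z ω i * Z ω j ∂P).PosDef)
    -- `β* = (β*_0, β*_A, β*_W)` is the unique least-squares minimizer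
    (βstar : ℝ × ℝ × (Fin k → ℝ))
    (hmin : ∀ β : ℝ × ℝ × (Fin k → ℝ),
      ∫ ω, (Y ω - (βstar.1 + βstar.2.1 * A ω + ∑ i, βstar.2.2 i * W ω i)) ^ 2 ∂P
        ≤ ∫ ω, (Y ω - (β.1 + β.2.1 * A ω + ∑ i, β.2.2 i * W ω i)) ^ 2 ∂P)
    (huniq : ∀ β : ℝ × ℝ × (Fin k → ℝ),
      ∫ ω, (Y ω - (β.1 + β.2.1 * A ω + ∑ i, β.2.2 i * W ω i)) ^ 2 ∂P
        = ∫ ω, (Y ω - (βstar.1 + βstar.2.1 * A ω + ∑ i, βstar.2.2 i * W ω i)) ^ 2 ∂P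
        → β = βstar) :
    βstar.2.1 = (∫ ω, Y ω * A ω ∂P) / π - (∫ ω, Y ω * (1 - A ω) ∂P) / (1 - π) := by
  
  obtain ⟨b0, bA, bW⟩ := βstar
  simp only at hmin ⊢
  set S : Ω → ℝ := fun ω => ∑ i, bW i * W ω i with hSdef
  set R : Ω → ℝ := fun ω => Y ω - (b0 + bA * A ω + S ω) with hRdef
  have hAbd : ∀ ω, ‖A ω‖ ≤ 1 := fun ω => by
    rcases hA01 ω with h | h <;> simp [h]
  have hAL2 : MemLp A 2 P :=
    (memLp_top_of_bound hA.aestronglyMeasurable 1 (ae_of_all _ hAbd)).mono_exponent le_top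
  have hSmeas : Measurable S :=
    Finset.measurable_sum _ (fun i _ => ((measurable_pi_apply i).comp hW).const_mul _)
  have hSL2 : MemLp S 2 P := by
    exact memLp_finset_sum _ (fun i _ => (hWL2 i).const_mul (bW i))
  have hRL2 : MemLp R 2 P := by
    rw [hRdef]
    have h := hYL2.sub (((memLp_const b0).add (hAL2.const_mul bA)).add hSL2)
    exact h
  have hRint : Integrable R P := hRL2.integrable one_le_two
  have hRsq : Integrable (fun ω => R ω ^ 2) P := hRL2.integrable_sq
  have hYint : Integrable Y P := hYL2.integrable one_le_two
  have hAint : Integrable A P := hAL2.integrable one_le_two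
  have hSint : Integrable S P := hSL2.integrable one_le_two
  have hAR : Integrable (fun ω => A ω * R ω) P :=
    hRint.bdd_mul hA.aestronglyMeasurable (ae_of_all _ hAbd)
  have hAY : Integrable (fun ω => A ω * Y ω) P :=
    hYint.bdd_mul hA.aestronglyMeasurable (ae_of_all _ hAbd)
  have hAS : Integrable (fun ω => A ω * S ω) P :=
    hSint.bdd_mul hA.aestronglyMeasurable (ae_of_all _ hAbd)
  have hAA : ∀ ω, A ω * A ω = A ω := fun ω => by
    rcases hA01 ω with h | h <;> simp [h]
  have hAAint : Integrable (fun ω => A ω * A ω) P := by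
    simpa only [funext hAA] using hAint
  -- E[A] = π
  have hEA : ∫ ω, A ω ∂P = π := by
    rw [hπ]
    conv_lhs => rw [show A = ({ω | A ω = 1}).indicator (fun _ => (1:ℝ)) from
      funext fun ω => by rcases hA01 ω with h | h <;> simp [Set.indicator, h]]
    rw [integral_indicator_const (1:ℝ)
      (show MeasurableSet {ω | A ω = 1} from hA (measurableSet_singleton 1))]
    simp
    rfl
  -- normal equation: constant direction
  have eR : ∫ ω, R ω ∂P = 0 := by
    apply aux_zero' (d := ∫ ω, (1:ℝ) * (1:ℝ) ∂P)
    intro t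
    have h := hmin (b0 + t, bA, bW)
    simp only at h
    have h2 : (fun ω => (Y ω - (b0 + t + bA * A ω + ∑ i, bW i * W ω i)) ^ 2)
        = fun ω => (R ω - t * (1:ℝ)) ^ 2 := funext fun ω => by
      simp only [hRdef, hSdef] <;> ring
    have h3 : (fun ω => (Y ω - (b0 + bA * A ω + ∑ i, bW i * W ω i)) ^ 2)
        = fun ω => R ω ^ 2 := funext fun ω => by
      simp only [hRdef, hSdef] <;> ring
    rw [h2, h3] at h
    rw [expand_int' P R (fun _ => (1:ℝ)) hRsq (by simpa using hRint)
      (by simpa using (integrable_const (1:ℝ))) t] at h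
    have h4 : ∫ ω, (1:ℝ) * R ω ∂P = ∫ ω, R ω ∂P := by simp
    rw [h4] at h
    linarith
  -- normal equation: A direction
  have eAR : ∫ ω, A ω * R ω ∂P = 0 := by
    apply aux_zero' (d := ∫ ω, A ω * A ω ∂P)
    intro t
    have h := hmin (b0, bA + t, bW)
    simp only at h
    have h2 : (fun ω => (Y ω - (b0 + (bA + t) * A ω + ∑ i, bW i * W ω i)) ^ 2)
        = fun ω => (R ω - t * A ω) ^ 2 := funext fun ω => by
      simp only [hRdef, hSdef] <;> ring
    have h3 : (fun ω => (Y ω - (b0 + bA * A ω + ∑ i, bW i * W ω i)) ^ 2)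
        = fun ω => R ω ^ 2 := funext fun ω => by
      simp only [hRdef, hSdef] <;> ring
    rw [h2, h3] at h
    rw [expand_int' P R A hRsq hAR hAAint t] at h
    linarith
  -- independence: E[A·S] = π·E[S]
  have hψ : Measurable (fun v : Fin k → ℝ => ∑ i, bW i * v i) :=
    Finset.measurable_sum _ (fun i _ => (measurable_pi_apply i).const_mul _)
  have hindAS : IndepFun A S P := by exact hindep.comp measurable_id hψ
  have hEAS : ∫ ω, A ω * S ω ∂P = π * ∫ ω, S ω ∂P := by
    have h := hindAS.integral_mul_eq_mul_integral hA.aestronglyMeasurable hSmeas.aestronglyMeasurable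
    rw [← hEA]; exact h
  set m := ∫ ω, Y ω ∂P with hm
  set a := ∫ ω, A ω * Y ω ∂P with ha
  set s := ∫ ω, S ω ∂P with hs
  -- decompose ∫ R
  have hf1 : Integrable (fun ω => b0 + bA * A ω) P := by
    exact (integrable_const b0).add (hAint.const_mul bA)
  have hlin : Integrable (fun ω => b0 + bA * A ω + S ω) P := by exact hf1.add hSint
  have d1 : ∫ ω, R ω ∂P = ∫ ω, Y ω ∂P - ∫ ω, (b0 + bA * A ω + S ω) ∂P := by
    exact integral_sub hYint hlin
  have d2 : ∫ ω, (b0 + bA * A ω + S ω) ∂P = b0 + bA * π + s := by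
    rw [integral_add hf1 hSint, integral_add (integrable_const b0) (hAint.const_mul bA),
      integral_const_mul, hEA, integral_const]
    simp [hs]
  have eR' : m - (b0 + bA * π + s) = 0 := by rw [hm, ← d2, ← d1]; exact eR
  -- decompose ∫ A·R
  have hg1 : Integrable (fun ω => b0 * A ω) P := by exact hAint.const_mul b0
  have hg2' : Integrable (fun ω => bA * A ω) P := by exact hAint.const_mul bA
  have hg12 : Integrable (fun ω => b0 * A ω + bA * A ω) P := by exact hg1.add hg2'
  have hgAll : Integrable (fun ω => b0 * A ω + bA * A ω + A ω * S ω) P := by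
    exact hg12.add hAS
  have h1 : (fun ω => A ω * R ω)
      = fun ω => A ω * Y ω - (b0 * A ω + bA * A ω + A ω * S ω) := funext fun ω => by
    simp only [hRdef]
    linear_combination (-bA) * hAA ω
  have d3 : ∫ ω, A ω * R ω ∂P
      = ∫ ω, A ω * Y ω ∂P - ∫ ω, (b0 * A ω + bA * A ω + A ω * S ω) ∂P := by
    rw [h1]; exact integral_sub hAY hgAll
  have d4 : ∫ ω, (b0 * A ω + bA * A ω + A ω * S ω) ∂P = b0 * π + bA * π + π * s := by
    rw [integral_add hg12 hAS, integral_add hg1 hg2',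
      integral_const_mul, integral_const_mul, hEA, hEAS]
  have eAR' : a - (b0 * π + bA * π + π * s) = 0 := by rw [ha, ← d4, ← d3]; exact eAR
  -- rewrite target integrals
  have hYA : ∫ ω, Y ω * A ω ∂P = a := by
    rw [ha]; congr 1; funext ω; ring
  have hY1A : ∫ ω, Y ω * (1 - A ω) ∂P = m - a := by
    have h2 : (fun ω => Y ω * (1 - A ω)) = fun ω => Y ω - A ω * Y ω :=
      funext fun ω => by ring
    rw [h2]; rw [ha, hm]; exact integral_sub hYint hAY
  rw [hYA, hY1A]
  have hπ1' : (1:ℝ) - π ≠ 0 := by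
    have : π < 1 := hπ1
    intro hcon; linarith
  have hπ0' : π ≠ 0 := ne_of_gt hπ0
  have haa : a = b0 * π + bA * π + π * s := by linarith
  have hmm2 : m = b0 + bA * π + s := by linarith
  rw [haa, hmm2]
  field_simp
  ring
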